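/- Define Φ_t(A) ∈ SL_n(ℝ) for A ∈ SL_n(ℝ) and t ≥ 0 by Φ_t(A)x = c(A,t)⁻¹ Σ_{i=1}^n syst_i(A)^t π_{Θ_i(A)}(Ax), where Θ_i(A) = (AΛ_{i-1}(A))^⊥ ∩ (AΛ_i(A)), π_{Θ_i(A)} is orthogonal projection onto Θ_i(A), and c(A,t) = (Π_i syst_i(A)^{t·dim Θ_i(A)})^{1/n}. Then for all x ∈ ℝ^n: |Φ_t(A)x| ≥ (syst₁(A)/ (Π_i syst_i(A)^{dim Θ_i(A)})^{1/n})^t · |Ax|, with equality if and only if x ∈ Λ₁(A). -/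

import Mathlib

open Matrix Submodule Module

/-- The Euclidean norm of a vector in `ℝⁿ`. -/
noncomputable def eucNorm {n : ℕ} (w : Fin n → ℝ) : ℝ := Real.sqrt (∑ i, (w i) ^ 2)

/-- The real vector associated to an integer vector. -/
def intVec {n : ℕ} (v : Fin n → ℤ) : Fin n → ℝ := fun i => (v i : ℝ)

/-- The systole (first minimum) of the lattice `Aℤⁿ`. -/
noncomputable def syst1 {n : ℕ} (A : Matrix (Fin n) (Fin n) ℝ) : ℝ :=
  sInf {r : ℝ | ∃ v : Fin n → ℤ, v ≠ 0 ∧ eucNorm (A.mulVec (intVec v)) = r}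

/-- The `i`-th systole (Minkowski's `i`-th successive minimum) of the lattice `Aℤⁿ`. -/
noncomputable def systI {n : ℕ} (A : Matrix (Fin n) (Fin n) ℝ) (i : ℕ) : ℝ :=
  sInf {r : ℝ | i ≤ Module.finrank ℝ (Submodule.span ℝ
    (intVec '' {v : Fin n → ℤ | eucNorm (A.mulVec (intVec v)) < r}))}

/-- The set of shortest (nonzero) integer vectors of `A`. -/
noncomputable def S1 {n : ℕ} (A : Matrix (Fin n) (Fin n) ℝ) : Set (Fin n → ℤ) :=
  {v | v ≠ 0 ∧ eucNorm (A.mulVec (intVec v)) = syst1 A}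

/-- `A` is well-rounded if its shortest vectors span `ℝⁿ`. -/
noncomputable def WellRounded {n : ℕ} (A : Matrix (Fin n) (Fin n) ℝ) : Prop :=
  Submodule.span ℝ (intVec '' S1 A) = ⊤

/-- The span of the integer vectors realized up to the `i`-th minimum. -/
noncomputable def LambdaI {n : ℕ} (A : Matrix (Fin n) (Fin n) ℝ) (i : ℕ) :
    Submodule ℝ (Fin n → ℝ) :=
  Submodule.span ℝ (intVec '' {v : Fin n → ℤ | eucNorm (A.mulVec (intVec v)) ≤ systI A i})

/-- The real matrix associated to an element of `SL_n(ℤ)`. -/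
def SLZtoR {n : ℕ} (γ : Matrix.SpecialLinearGroup (Fin n) ℤ) : Matrix (Fin n) (Fin n) ℝ :=
  (γ : Matrix (Fin n) (Fin n) ℤ).map (Int.cast)

/-- The element of Euclidean space associated to a vector in `ℝⁿ`. -/
noncomputable def vecE {n : ℕ} (w : Fin n → ℝ) : EuclideanSpace ℝ (Fin n) :=
  (WithLp.equiv 2 (Fin n → ℝ)).symm w

/-- `Λ_i(A)` as a subspace of Euclidean space, with `Λ₀(A) = 0`. -/
noncomputable def LambdaE {n : ℕ} (A : Matrix (Fin n) (Fin n) ℝ) :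
    ℕ → Submodule ℝ (EuclideanSpace ℝ (Fin n))
  | 0 => ⊥
  | (i + 1) => Submodule.span ℝ ((fun v : Fin n → ℤ => vecE (intVec v)) ''
      {v : Fin n → ℤ | eucNorm (A.mulVec (intVec v)) ≤ systI A (i + 1)})

/-- `Θ_i(A) = (AΛ_{i-1}(A))^⊥ ∩ (AΛ_i(A))`. -/
noncomputable def ThetaE {n : ℕ} (A : Matrix (Fin n) (Fin n) ℝ) (i : ℕ) :
    Submodule ℝ (EuclideanSpace ℝ (Fin n)) :=
  ((LambdaE A (i - 1)).map (Matrix.toEuclideanLin A))ᗮ ⊓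
    (LambdaE A i).map (Matrix.toEuclideanLin A)

/-- The normalization factor `c(A,t) = (∏ᵢ systᵢ(A)^{t·dim Θᵢ(A)})^{1/n}`. -/
noncomputable def cNorm {n : ℕ} (A : Matrix (Fin n) (Fin n) ℝ) (t : ℝ) : ℝ :=
  (∏ i ∈ Finset.Icc 1 n,
      systI A i ^ (t * (Module.finrank ℝ (ThetaE A i) : ℝ))) ^ ((1 : ℝ) / n)

/-- The linear map `Φ_t(A) : x ↦ c(A,t)⁻¹ ∑ᵢ systᵢ(A)^t π_{Θᵢ(A)}(Ax)`. -/
noncomputable def PhiLin {n : ℕ} (A : Matrix (Fin n) (Fin n) ℝ) (t : ℝ) :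
    EuclideanSpace ℝ (Fin n) →ₗ[ℝ] EuclideanSpace ℝ (Fin n) :=
  (cNorm A t)⁻¹ • ∑ i ∈ Finset.Icc 1 n, systI A i ^ t •
    ((ThetaE A i).subtype ∘ₗ (orthogonalProjection (ThetaE A i)).toLinearMap ∘ₗ
      Matrix.toEuclideanLin A)

namespace Stmt16Aux

open Matrix Submodule Module Finset

variable {n : ℕ}

noncomputable def eqv (n : ℕ) : (Fin n → ℝ) ≃ₗ[ℝ] EuclideanSpace ℝ (Fin n) :=
  (WithLp.linearEquiv 2 ℝ (Fin n → ℝ)).symm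

lemma vecE_eq (w : Fin n → ℝ) : vecE w = eqv n w := rfl

lemma enorm_eq (w : Fin n → ℝ) : eucNorm w = ‖vecE w‖ := by
  rw [EuclideanSpace.norm_eq]
  unfold eucNorm
  congr 1
  refine Finset.sum_congr rfl fun i _ => ?_
  rw [Real.norm_eq_abs, sq_abs]
  rfl

lemma enorm_nonneg (w : Fin n → ℝ) : 0 ≤ eucNorm w := Real.sqrt_nonneg _

lemma vecE_injective : Function.Injective (vecE (n := n)) :=
  fun a b h => by simpa [vecE_eq] using congrArg (eqv n).symm h

lemma enorm_eq_zero {w : Fin n → ℝ} : eucNorm w = 0 ↔ w = 0 := by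
  rw [enorm_eq, norm_eq_zero]
  constructor
  · intro h
    exact vecE_injective (by rw [h]; simp [vecE])
  · rintro rfl; simp [vecE]

lemma intVec_eq_zero {v : Fin n → ℤ} : intVec v = 0 ↔ v = 0 := by
  constructor
  · intro h; funext i
    have := congrFun h i
    simpa [intVec] using this
  · rintro rfl; funext i; simp [intVec]

lemma coord_le_enorm (w : Fin n → ℝ) (j : Fin n) : |w j| ≤ eucNorm w := by
  unfold eucNorm
  rw [← Real.sqrt_sq_eq_abs]
  apply Real.sqrt_le_sqrt
  exact Finset.single_le_sum (f := fun i => w i ^ 2) (fun i _ => sq_nonneg _) (Finset.mem_univ j)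

section Matrices

variable (A B : Matrix (Fin n) (Fin n) ℝ)

lemma mulVec_cancel (hBA : B * A = 1) (v : Fin n → ℝ) : B.mulVec (A.mulVec v) = v := by
  rw [Matrix.mulVec_mulVec, hBA, Matrix.one_mulVec]

lemma enorm_mulVec_pos (hBA : B * A = 1) {v : Fin n → ℤ} (hv : v ≠ 0) :
    0 < eucNorm (A.mulVec (intVec v)) := by
  rcases (enorm_nonneg (A.mulVec (intVec v))).lt_or_eq with h | h
  · exact h
  · exfalso
    have h0 : A.mulVec (intVec v) = 0 := enorm_eq_zero.1 h.symm
    have : intVec v = 0 := by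
      have := mulVec_cancel A B hBA (intVec v)
      rw [h0] at this
      simpa [Matrix.mulVec_zero] using this.symm
    exact hv (intVec_eq_zero.1 this)

lemma finite_le (hBA : B * A = 1) (R : ℝ) :
    {v : Fin n → ℤ | eucNorm (A.mulVec (intVec v)) ≤ R}.Finite := by
  set C : Fin n → ℝ := fun i => (∑ j, |B i j|) * max R 0 with hC
  have key : ∀ v ∈ {v : Fin n → ℤ | eucNorm (A.mulVec (intVec v)) ≤ R},
      ∀ i, |(v i : ℝ)| ≤ C i := by
    intro v hv i
    have hvi : (v i : ℝ) = (B.mulVec (A.mulVec (intVec v))) i := by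
      rw [mulVec_cancel A B hBA]; rfl
    rw [hvi, Matrix.mulVec, dotProduct]
    calc |∑ j, B i j * (A.mulVec (intVec v)) j| ≤ ∑ j, |B i j * (A.mulVec (intVec v)) j| :=
          Finset.abs_sum_le_sum_abs _ _
      _ ≤ ∑ j, |B i j| * max R 0 := by
          apply Finset.sum_le_sum
          intro j _
          rw [abs_mul]
          apply mul_le_mul_of_nonneg_left _ (abs_nonneg _)
          exact le_trans ((coord_le_enorm _ j).trans hv) (le_max_left _ _)
      _ = C i := by simp only [hC, Finset.sum_mul]
  apply Set.Finite.subset (Set.Finite.pi (fun i => Set.finite_Icc (-⌈C i⌉) ⌈C i⌉))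
  intro v hv
  simp only [Set.mem_pi, Set.mem_univ, Set.mem_Icc, forall_true_left]
  intro i
  have h1 : |(v i : ℝ)| ≤ (⌈C i⌉ : ℝ) := (key v hv i).trans (Int.le_ceil _)
  rw [← Int.cast_abs, Int.cast_le] at h1
  exact abs_le.1 h1

end Matrices

section Systoles

open Matrix Submodule Module Finset
variable (A B : Matrix (Fin n) (Fin n) ℝ)

/-- The set of achieved norms. -/
def MSet : Set ℝ := {r : ℝ | ∃ v : Fin n → ℤ, v ≠ 0 ∧ eucNorm (A.mulVec (intVec v)) = r}

/-- The defining set of `systI`. -/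
def TSet (i : ℕ) : Set ℝ := {r : ℝ | i ≤ Module.finrank ℝ (Submodule.span ℝ
    (intVec '' {v : Fin n → ℤ | eucNorm (A.mulVec (intVec v)) < r}))}

lemma syst1_eq : syst1 A = sInf (MSet A) := rfl

lemma systI_eq (i : ℕ) : systI A i = sInf (TSet A i) := rfl

lemma MSet_isLeast (hn : 0 < n) (hBA : B * A = 1) : IsLeast (MSet A) (syst1 A) := by
  classical
  set v₀ : Fin n → ℤ := Pi.single ⟨0, hn⟩ 1 with hv₀
  have hv₀ne : v₀ ≠ 0 := by
    intro h
    have := congrFun h ⟨0, hn⟩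
    simp [hv₀] at this
  set R := eucNorm (A.mulVec (intVec v₀)) with hR
  set Fs : Finset (Fin n → ℤ) :=
    (finite_le A B hBA R).toFinset.filter (fun v => v ≠ 0) with hFs
  have hv₀mem : v₀ ∈ Fs := by
    simp [hFs, Set.Finite.mem_toFinset, hv₀ne, hR]
  have hFsne : Fs.Nonempty := ⟨v₀, hv₀mem⟩
  set N : Finset ℝ := Fs.image (fun v => eucNorm (A.mulVec (intVec v))) with hN
  have hNne : N.Nonempty := hFsne.image _
  have hleast : IsLeast (MSet A) (N.min' hNne) := by
    constructor
    · obtain ⟨v, hvF, hv⟩ := Finset.mem_image.1 (N.min'_mem hNne)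
      have hvne : v ≠ 0 := (Finset.mem_filter.1 hvF).2
      exact ⟨v, hvne, hv⟩
    · rintro r ⟨v, hvne, rfl⟩
      by_cases hvR : eucNorm (A.mulVec (intVec v)) ≤ R
      · apply N.min'_le
        apply Finset.mem_image_of_mem
        simp [hFs, Set.Finite.mem_toFinset, hvne, hvR]
      · push_neg at hvR
        refine le_trans ?_ hvR.le
        apply N.min'_le
        exact Finset.mem_image_of_mem _ hv₀mem
  rwa [syst1_eq, hleast.csInf_eq]

lemma syst1_pos (hn : 0 < n) (hBA : B * A = 1) : 0 < syst1 A := by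
  obtain ⟨⟨v, hvne, hv⟩, -⟩ := MSet_isLeast A B hn hBA
  rw [← hv]
  exact enorm_mulVec_pos A B hBA hvne

lemma syst1_le (hn : 0 < n) (hBA : B * A = 1) {v : Fin n → ℤ} (hv : v ≠ 0) :
    syst1 A ≤ eucNorm (A.mulVec (intVec v)) :=
  (MSet_isLeast A B hn hBA).2 ⟨v, hv, rfl⟩

lemma TSet_anti {i j : ℕ} (hij : i ≤ j) : TSet A j ⊆ TSet A i :=
  fun _ hr => le_trans hij hr

lemma intVec_single (k : Fin n) : intVec (Pi.single k 1) = Pi.single k (1:ℝ) := by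
  funext i
  simp only [intVec]
  rcases eq_or_ne i k with rfl | h
  · simp
  · simp [Pi.single_eq_of_ne h]

lemma TSet_nonempty {i : ℕ} (hin : i ≤ n) : (TSet A i).Nonempty := by
  classical
  set r₀ : ℝ := 1 + ∑ k, eucNorm (A.mulVec (intVec (Pi.single k 1))) with hr₀
  refine ⟨r₀, ?_⟩
  have hsub : ∀ k : Fin n, (Pi.single k (1:ℝ)) ∈
      intVec '' {v : Fin n → ℤ | eucNorm (A.mulVec (intVec v)) < r₀} := by
    intro k
    refine ⟨Pi.single k 1, ?_, intVec_single k⟩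
    have h1 : eucNorm (A.mulVec (intVec (Pi.single k 1))) ≤
        ∑ k', eucNorm (A.mulVec (intVec (Pi.single k' 1))) :=
      Finset.single_le_sum (f := fun k' => eucNorm (A.mulVec (intVec (Pi.single k' 1))))
        (fun k' _ => enorm_nonneg _) (Finset.mem_univ k)
    simp only [Set.mem_setOf_eq, hr₀]
    linarith
  have htop : Submodule.span ℝ
      (intVec '' {v : Fin n → ℤ | eucNorm (A.mulVec (intVec v)) < r₀}) = ⊤ := by
    rw [eq_top_iff, ← (Pi.basisFun ℝ (Fin n)).span_eq]
    apply Submodule.span_mono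
    rintro w ⟨k, rfl⟩
    simpa using hsub k
  show i ≤ _
  rw [htop, finrank_top]
  simpa using hin

lemma TSet_bddBelow (i : ℕ) (hi : 1 ≤ i) : BddBelow (TSet A i) := by
  refine ⟨0, fun r hr => ?_⟩
  by_contra hneg
  push_neg at hneg
  have hempty : {v : Fin n → ℤ | eucNorm (A.mulVec (intVec v)) < r} = ∅ := by
    ext v
    simp only [Set.mem_setOf_eq, Set.mem_empty_iff_false, iff_false, not_lt]
    exact le_trans hneg.le (enorm_nonneg _)
  rw [TSet, Set.mem_setOf_eq, hempty] at hr
  rw [Set.image_empty, Submodule.span_empty] at hr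
  simp only [finrank_bot] at hr
  omega

lemma systI_mono {i j : ℕ} (hi : 1 ≤ i) (hij : i ≤ j) (hjn : j ≤ n) :
    systI A i ≤ systI A j :=
  csInf_le_csInf (TSet_bddBelow A i hi) (TSet_nonempty A hjn) (TSet_anti A hij)

lemma TSet_one (hn : 0 < n) (hBA : B * A = 1) :
    TSet A 1 = Set.Ioi (syst1 A) := by
  classical
  obtain ⟨⟨v₁, hv₁ne, hv₁⟩, hlb⟩ := MSet_isLeast A B hn hBA
  ext r
  simp only [TSet, Set.mem_setOf_eq, Set.mem_Ioi]
  constructor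
  · intro h
    have hnebot : Submodule.span ℝ
        (intVec '' {v : Fin n → ℤ | eucNorm (A.mulVec (intVec v)) < r}) ≠ ⊥ := by
      intro hbot
      rw [hbot] at h
      simp at h
    rw [Ne, Submodule.span_eq_bot] at hnebot
    push_neg at hnebot
    obtain ⟨w, ⟨v, hv, rfl⟩, hwne⟩ := hnebot
    have hvne : v ≠ 0 := fun h => hwne (by rw [h]; exact intVec_eq_zero.2 rfl)
    exact lt_of_le_of_lt (hlb ⟨v, hvne, rfl⟩) hv
  · intro h
    have hmem : intVec v₁ ∈ Submodule.span ℝ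
        (intVec '' {v : Fin n → ℤ | eucNorm (A.mulVec (intVec v)) < r}) :=
      Submodule.subset_span ⟨v₁, by simp only [Set.mem_setOf_eq]; rw [hv₁]; exact h, rfl⟩
    have hne : intVec v₁ ≠ 0 := fun hh => hv₁ne (intVec_eq_zero.1 hh)
    have hnebot : Submodule.span ℝ
        (intVec '' {v : Fin n → ℤ | eucNorm (A.mulVec (intVec v)) < r}) ≠ ⊥ := by
      intro hb
      rw [hb, Submodule.mem_bot] at hmem
      exact hne hmem
    have : 0 < finrank ℝ (Submodule.span ℝ
        (intVec '' {v : Fin n → ℤ | eucNorm (A.mulVec (intVec v)) < r})) :=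
      Module.finrank_pos_iff.2 (Submodule.nontrivial_iff_ne_bot.2 hnebot)
    omega

lemma systI_one (hn : 0 < n) (hBA : B * A = 1) : systI A 1 = syst1 A := by
  rw [systI_eq, TSet_one A B hn hBA, csInf_Ioi]

end Systoles
section Gap

open Matrix Submodule Module Finset
variable (A B : Matrix (Fin n) (Fin n) ℝ)

lemma gap (hBA : B * A = 1) (m : ℝ) :
    ∃ ε > 0, ∀ v : Fin n → ℤ,
      (eucNorm (A.mulVec (intVec v)) < m + ε ↔ eucNorm (A.mulVec (intVec v)) ≤ m) := by
  classical
  set F : Finset (Fin n → ℤ) := (finite_le A B hBA (m+1)).toFinset with hF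
  set K : Finset ℝ := (F.image (fun v => eucNorm (A.mulVec (intVec v)))).filter (fun r => m < r)
    with hK
  have hmemK : ∀ v : Fin n → ℤ, m < eucNorm (A.mulVec (intVec v)) →
      eucNorm (A.mulVec (intVec v)) ≤ m + 1 → eucNorm (A.mulVec (intVec v)) ∈ K := by
    intro v h1 h2
    rw [hK, Finset.mem_filter]
    refine ⟨Finset.mem_image_of_mem _ ?_, h1⟩
    rw [hF, Set.Finite.mem_toFinset]
    exact h2
  by_cases hKne : K.Nonempty
  · have hKmin : m < K.min' hKne := (Finset.mem_filter.1 (K.min'_mem hKne)).2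
    refine ⟨min 1 (K.min' hKne - m), lt_min one_pos (by linarith), fun v => ?_⟩
    constructor
    · intro h
      by_contra hle
      push_neg at hle
      have h2 : eucNorm (A.mulVec (intVec v)) ≤ m + 1 := by
        have := min_le_left 1 (K.min' hKne - m)
        linarith
      have hmem := hmemK v hle h2
      have := K.min'_le _ hmem
      have := min_le_right 1 (K.min' hKne - m)
      linarith
    · intro h
      have : (0:ℝ) < min 1 (K.min' hKne - m) := lt_min one_pos (by linarith)
      linarith
  · refine ⟨1, one_pos, fun v => ?_⟩
    constructor
    · intro h
      by_contra hle
      push_neg at hle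
      exact hKne ⟨_, hmemK v hle (by linarith)⟩
    · intro h; linarith

lemma finrank_lambda (hn : 0 < n) (hBA : B * A = 1) {i : ℕ} (h1 : 1 ≤ i) (hin : i ≤ n) :
    i ≤ finrank ℝ (Submodule.span ℝ
      (intVec '' {v : Fin n → ℤ | eucNorm (A.mulVec (intVec v)) ≤ systI A i})) := by
  obtain ⟨ε, hε, hgap⟩ := gap A B hBA (systI A i)
  have hne := TSet_nonempty A (i := i) hin
  have hlt : sInf (TSet A i) < systI A i + ε := by
    rw [← systI_eq]; linarith
  obtain ⟨r, hr, hrlt⟩ := exists_lt_of_csInf_lt hne hlt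
  refine le_trans hr (Submodule.finrank_mono (Submodule.span_mono (Set.image_mono ?_)))
  intro v hv
  exact (hgap v).1 (lt_trans hv hrlt)

lemma lambdaE_succ (i : ℕ) : LambdaE A (i+1) =
    Submodule.map (eqv n : (Fin n → ℝ) →ₗ[ℝ] EuclideanSpace ℝ (Fin n)) (Submodule.span ℝ
      (intVec '' {v : Fin n → ℤ | eucNorm (A.mulVec (intVec v)) ≤ systI A (i+1)})) := by
  rw [LambdaE, Submodule.map_span, Set.image_image]
  rfl

lemma lambdaE_top (hn : 0 < n) (hBA : B * A = 1) : LambdaE A n = ⊤ := by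
  obtain ⟨k, rfl⟩ : ∃ k, n = k + 1 := ⟨n - 1, by omega⟩
  rw [lambdaE_succ]
  have h1 := finrank_lambda A B hn hBA (i := k+1) (by omega) le_rfl
  have h2 : Submodule.span ℝ
      (intVec '' {v : Fin (k+1) → ℤ | eucNorm (A.mulVec (intVec v)) ≤ systI A (k+1)}) = ⊤ := by
    apply Submodule.eq_top_of_finrank_eq
    have hle := Submodule.finrank_le (Submodule.span ℝ
      (intVec '' {v : Fin (k+1) → ℤ | eucNorm (A.mulVec (intVec v)) ≤ systI A (k+1)}))
    simp only [Module.finrank_fintype_fun_eq_card, Fintype.card_fin] at hle ⊢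
    omega
  rw [h2, Submodule.map_top]
  exact LinearEquiv.range (eqv (k+1))

lemma lambdaE_mono_succ {i j : ℕ} (h1 : 1 ≤ i) (hij : i ≤ j) (hjn : j ≤ n) :
    LambdaE A i ≤ LambdaE A j := by
  obtain ⟨k, rfl⟩ : ∃ k, i = k + 1 := ⟨i - 1, by omega⟩
  obtain ⟨l, rfl⟩ : ∃ l, j = l + 1 := ⟨j - 1, by omega⟩
  rw [LambdaE, LambdaE]
  apply Submodule.span_mono
  apply Set.image_mono
  intro v hv
  exact le_trans hv (systI_mono A (by omega) hij hjn)

lemma lambdaE_mono {i j : ℕ} (hij : i ≤ j) (hjn : j ≤ n) :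
    LambdaE A i ≤ LambdaE A j := by
  rcases Nat.eq_zero_or_pos i with rfl | hi
  · rw [LambdaE]; exact bot_le
  · exact lambdaE_mono_succ A hi hij hjn

lemma lambdaE_congr {i j : ℕ} (h1 : 1 ≤ i) (h2 : 1 ≤ j) (h : systI A i = systI A j) :
    LambdaE A i = LambdaE A j := by
  obtain ⟨k, rfl⟩ : ∃ k, i = k + 1 := ⟨i - 1, by omega⟩
  obtain ⟨l, rfl⟩ : ∃ l, j = l + 1 := ⟨j - 1, by omega⟩
  rw [LambdaE, LambdaE, h]

end Gap
section Euclid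

open Matrix Submodule Module Finset
variable (A B : Matrix (Fin n) (Fin n) ℝ)

/-- `AΛᵢ(A)` inside Euclidean space. -/
noncomputable def WE (A : Matrix (Fin n) (Fin n) ℝ) (i : ℕ) :
    Submodule ℝ (EuclideanSpace ℝ (Fin n)) :=
  (LambdaE A i).map (Matrix.toEuclideanLin A)

lemma theta_def (i : ℕ) : ThetaE A i = (WE A (i-1))ᗮ ⊓ WE A i := rfl

lemma WE_zero : WE A 0 = ⊥ := by
  rw [WE, LambdaE, Submodule.map_bot]

lemma WE_mono {i j : ℕ} (hij : i ≤ j) (hjn : j ≤ n) : WE A i ≤ WE A j :=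
  Submodule.map_mono (lambdaE_mono A hij hjn)

lemma toEuclideanLin_surj (hAB : A * B = 1) :
    Function.Surjective (Matrix.toEuclideanLin A) := by
  intro y
  refine ⟨Matrix.toEuclideanLin B y, ?_⟩
  rw [Matrix.toEuclideanLin_apply, Matrix.toEuclideanLin_apply]
  simp only [Equiv.apply_symm_apply]
  rw [Matrix.mulVec_mulVec, hAB, Matrix.one_mulVec]

lemma toEuclideanLin_inj (hBA : B * A = 1) :
    Function.Injective (Matrix.toEuclideanLin A) := by
  intro y z h
  have : ∀ w : EuclideanSpace ℝ (Fin n),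
      Matrix.toEuclideanLin B (Matrix.toEuclideanLin A w) = w := by
    intro w
    rw [Matrix.toEuclideanLin_apply, Matrix.toEuclideanLin_apply]
    simp only [Equiv.apply_symm_apply]
    rw [Matrix.mulVec_mulVec, hBA, Matrix.one_mulVec]
  rw [← this y, ← this z, h]

lemma WE_top (hn : 0 < n) (hAB : A * B = 1) (hBA : B * A = 1) : WE A n = ⊤ := by
  rw [WE, lambdaE_top A B hn hBA, Submodule.map_top, LinearMap.range_eq_top]
  exact toEuclideanLin_surj A B hAB

lemma WE_sup_theta {i : ℕ} (h1 : 1 ≤ i) (hin : i ≤ n) :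
    WE A (i-1) ⊔ ThetaE A i = WE A i := by
  rw [theta_def]
  exact Submodule.sup_orthogonal_inf_of_hasOrthogonalProjection (WE_mono A (by omega) hin)

lemma iSup_theta_eq_WE (hn : 0 < n) {k : ℕ} (hk : k ≤ n) :
    (⨆ i ∈ Finset.Icc 1 k, ThetaE A i) = WE A k := by
  induction k with
  | zero =>
    rw [Finset.Icc_eq_empty (by omega), WE_zero]
    simp only [Finset.notMem_empty, iSup_false, iSup_bot]
  | succ k ih =>
    have hIcc : Finset.Icc 1 (k+1) = insert (k+1) (Finset.Icc 1 k) := by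
      ext i; simp [Finset.mem_Icc]; omega
    have h := WE_sup_theta A (i := k+1) (by omega) hk
    rw [Nat.add_sub_cancel] at h
    rw [hIcc, Finset.iSup_insert, ih (by omega), sup_comm, h]

lemma iSup_theta_top (hn : 0 < n) (hAB : A * B = 1) (hBA : B * A = 1) :
    (⨆ i ∈ Finset.Icc 1 n, ThetaE A i) = ⊤ := by
  rw [iSup_theta_eq_WE A hn le_rfl, WE_top A B hn hAB hBA]

lemma theta_le_WE (i : ℕ) : ThetaE A i ≤ WE A i := inf_le_right

lemma theta_le_orth (i : ℕ) : ThetaE A i ≤ (WE A (i-1))ᗮ := inf_le_left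

lemma inner_theta_zero {i j : ℕ} (hi : i ∈ Finset.Icc 1 n) (hj : j ∈ Finset.Icc 1 n)
    (hij : i ≠ j) {u z : EuclideanSpace ℝ (Fin n)} (hu : u ∈ ThetaE A i)
    (hz : z ∈ ThetaE A j) : (inner ℝ u z : ℝ) = 0 := by
  simp only [Finset.mem_Icc] at hi hj
  have main : ∀ i' j' : ℕ, 1 ≤ i' → j' ≤ n → i' < j' →
      ∀ u' z' : EuclideanSpace ℝ (Fin n), u' ∈ ThetaE A i' → z' ∈ ThetaE A j' →
        (inner ℝ u' z' : ℝ) = 0 := by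
    intro i' j' hi' hj' hij' u' z' hu' hz'
    have huW : u' ∈ WE A (j'-1) :=
      WE_mono A (i := i') (j := j'-1) (by omega) (by omega) (theta_le_WE A i' hu')
    have hzO : z' ∈ (WE A (j'-1))ᗮ := theta_le_orth A j' hz'
    exact (Submodule.mem_orthogonal _ _).1 hzO u' huW
  rcases lt_or_gt_of_ne hij with h | h
  · exact main i j hi.1 hj.2 h u z hu hz
  · rw [real_inner_comm]
    exact main j i hj.1 hi.2 h z u hz hu

lemma theta_mem_orth {i j : ℕ} (hi : i ∈ Finset.Icc 1 n) (hj : j ∈ Finset.Icc 1 n)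
    (hij : i ≠ j) {z : EuclideanSpace ℝ (Fin n)} (hz : z ∈ ThetaE A j) :
    z ∈ (ThetaE A i)ᗮ :=
  (Submodule.mem_orthogonal _ _).2 fun u hu => inner_theta_zero A hi hj hij hu hz

lemma sum_proj (hn : 0 < n) (hAB : A * B = 1) (hBA : B * A = 1)
    (y : EuclideanSpace ℝ (Fin n)) :
    ∑ i ∈ Finset.Icc 1 n, ((orthogonalProjection (ThetaE A i) y : EuclideanSpace ℝ (Fin n))) = y := by
  classical
  have hy : y ∈ (⨆ i, ⨆ (_ : i ∈ Finset.Icc 1 n), ThetaE A i) := by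
    rw [iSup_theta_top A B hn hAB hBA]; trivial
  refine Submodule.iSup_induction
    (motive := fun y => ∑ i ∈ Finset.Icc 1 n,
      ((orthogonalProjection (ThetaE A i) y : EuclideanSpace ℝ (Fin n))) = y)
    _ hy ?_ ?_ ?_
  · intro j z hz
    by_cases hjI : j ∈ Finset.Icc 1 n
    · rw [iSup_pos hjI] at hz
      rw [Finset.sum_eq_single_of_mem j hjI]
      · exact Submodule.starProjection_eq_self_iff.2 hz
      · intro i hiI hij
        rw [Submodule.orthogonalProjectionOnto_apply_of_mem_orthogonal
          (theta_mem_orth A hiI hjI hij hz)]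
        rfl
    · rw [iSup_neg hjI] at hz
      rw [(Submodule.mem_bot ℝ).1 hz]
      simp
  · simp
  · intro a b ha hb
    simp only [map_add, Submodule.coe_add, Finset.sum_add_distrib, ha, hb]

lemma norm_sum_sq {E : Type*} [NormedAddCommGroup E] [InnerProductSpace ℝ E]
    (s : Finset ℕ) (z : ℕ → E)
    (horth : ∀ i ∈ s, ∀ j ∈ s, i ≠ j → (inner ℝ (z i) (z j) : ℝ) = 0) (b : ℕ → ℝ) :
    ‖∑ i ∈ s, b i • z i‖^2 = ∑ i ∈ s, (b i)^2 * ‖z i‖^2 := by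
  rw [← real_inner_self_eq_norm_sq, sum_inner]
  refine Finset.sum_congr rfl fun i hi => ?_
  rw [inner_sum, Finset.sum_eq_single_of_mem i hi]
  · rw [real_inner_smul_left, real_inner_smul_right, real_inner_self_eq_norm_sq]; ring
  · intro j hj hij
    rw [real_inner_smul_left, real_inner_smul_right, horth i hi j hj hij.symm, mul_zero, mul_zero]

end Euclid
lemma rpow_base_inj {x y t : ℝ} (hx : 0 < x) (hy : 0 < y) (ht : 0 < t)
    (h : x ^ t = y ^ t) : x = y := by
  rcases lt_trichotomy x y with h1 | h1 | h1
  · exact absurd h (ne_of_lt (Real.rpow_lt_rpow hx.le h1 ht))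
  · exact h1
  · exact absurd h.symm (ne_of_lt (Real.rpow_lt_rpow hy.le h1 ht))

lemma sq_sub_eq_zero {a b : ℝ} (ha : 0 < a) (hb : 0 < b) (h : a^2 - b^2 = 0) : a = b := by
  nlinarith

end Stmt16Aux

open Stmt16Aux Finset Module in
/-- `|Φ_t(A)x| ≥ (syst₁(A)/(∏ᵢ systᵢ(A)^{dim Θᵢ(A)})^{1/n})^t · |Ax|`,
with equality (for `t > 0`) if and only if `x ∈ Λ₁(A)`. -/
theorem stmt16 (n : ℕ) (hn : 0 < n) (A : Matrix.SpecialLinearGroup (Fin n) ℝ)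
    (t : ℝ) (ht : 0 ≤ t) (x : EuclideanSpace ℝ (Fin n)) :
    ‖PhiLin (A : Matrix (Fin n) (Fin n) ℝ) t x‖ ≥
        (syst1 (A : Matrix (Fin n) (Fin n) ℝ) /
          (∏ i ∈ Finset.Icc 1 n, systI (A : Matrix (Fin n) (Fin n) ℝ) i ^
            ((Module.finrank ℝ (ThetaE (A : Matrix (Fin n) (Fin n) ℝ) i) : ℝ))) ^
              ((1 : ℝ) / n)) ^ t *
        ‖Matrix.toEuclideanLin (A : Matrix (Fin n) (Fin n) ℝ) x‖ ∧
      (0 < t →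
        (‖PhiLin (A : Matrix (Fin n) (Fin n) ℝ) t x‖ =
            (syst1 (A : Matrix (Fin n) (Fin n) ℝ) /
              (∏ i ∈ Finset.Icc 1 n, systI (A : Matrix (Fin n) (Fin n) ℝ) i ^
                ((Module.finrank ℝ (ThetaE (A : Matrix (Fin n) (Fin n) ℝ) i) : ℝ))) ^
                  ((1 : ℝ) / n)) ^ t *
            ‖Matrix.toEuclideanLin (A : Matrix (Fin n) (Fin n) ℝ) x‖ ↔
          x ∈ LambdaE (A : Matrix (Fin n) (Fin n) ℝ) 1)) := by
  classical
  set Am : Matrix (Fin n) (Fin n) ℝ := (A : Matrix (Fin n) (Fin n) ℝ) with hAmdef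
  set Bm : Matrix (Fin n) (Fin n) ℝ :=
    ((A⁻¹ : Matrix.SpecialLinearGroup (Fin n) ℝ) : Matrix (Fin n) (Fin n) ℝ) with hBmdef
  have hAB : Am * Bm = 1 := by
    rw [hAmdef, hBmdef, ← Matrix.SpecialLinearGroup.coe_mul, mul_inv_cancel,
      Matrix.SpecialLinearGroup.coe_one]
  have hBA : Bm * Am = 1 := by
    rw [hAmdef, hBmdef, ← Matrix.SpecialLinearGroup.coe_mul, inv_mul_cancel,
      Matrix.SpecialLinearGroup.coe_one]
  have hs : 0 < syst1 Am := syst1_pos Am Bm hn hBA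
  have hs1 : systI Am 1 = syst1 Am := systI_one Am Bm hn hBA
  have hmem : ∀ i ∈ Finset.Icc 1 n, syst1 Am ≤ systI Am i ∧ 0 < systI Am i := by
    intro i hi
    rw [Finset.mem_Icc] at hi
    have h1 : systI Am 1 ≤ systI Am i := systI_mono Am le_rfl hi.1 hi.2
    rw [hs1] at h1
    exact ⟨h1, lt_of_lt_of_le hs h1⟩
  set D : ℝ := (∏ i ∈ Finset.Icc 1 n, systI Am i ^
      ((Module.finrank ℝ (ThetaE Am i) : ℝ))) ^ ((1 : ℝ) / n) with hDdef
  have hPpos : 0 < ∏ i ∈ Finset.Icc 1 n, systI Am i ^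
      ((Module.finrank ℝ (ThetaE Am i) : ℝ)) :=
    Finset.prod_pos fun i hi => Real.rpow_pos_of_pos (hmem i hi).2 _
  have hDpos : 0 < D := Real.rpow_pos_of_pos hPpos _
  have hc : cNorm Am t = D ^ t := by
    rw [cNorm, hDdef]
    have h1 : (∏ i ∈ Finset.Icc 1 n, systI Am i ^ (t * ((finrank ℝ (ThetaE Am i)) : ℝ)))
        = (∏ i ∈ Finset.Icc 1 n, systI Am i ^ ((finrank ℝ (ThetaE Am i)) : ℝ)) ^ t := by
      rw [← Real.finset_prod_rpow _ _
        (fun i hi => Real.rpow_nonneg (hmem i hi).2.le _) t]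
      refine Finset.prod_congr rfl fun i hi => ?_
      rw [← Real.rpow_mul (hmem i hi).2.le, mul_comm]
    rw [h1, ← Real.rpow_mul hPpos.le, ← Real.rpow_mul hPpos.le, mul_comm]
  have hcpos : 0 < cNorm Am t := by
    rw [hc]; exact Real.rpow_pos_of_pos hDpos _
  set z : ℕ → EuclideanSpace ℝ (Fin n) := fun i =>
    ((orthogonalProjection (ThetaE Am i) (Matrix.toEuclideanLin Am x)) :
      EuclideanSpace ℝ (Fin n)) with hzdef
  have hzmem : ∀ i, z i ∈ ThetaE Am i := fun i => (orthogonalProjection _ _).2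
  have horth : ∀ i ∈ Finset.Icc 1 n, ∀ j ∈ Finset.Icc 1 n, i ≠ j →
      (inner ℝ (z i) (z j) : ℝ) = 0 := fun i hi j hj hij =>
    inner_theta_zero Am hi hj hij (hzmem i) (hzmem j)
  have hsum : ∑ i ∈ Finset.Icc 1 n, z i = Matrix.toEuclideanLin Am x :=
    sum_proj Am Bm hn hAB hBA _
  set U : ℝ := ∑ i ∈ Finset.Icc 1 n, (systI Am i ^ t)^2 * ‖z i‖^2 with hUdef
  set V : ℝ := ∑ i ∈ Finset.Icc 1 n, ‖z i‖^2 with hVdef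
  have hUnn : 0 ≤ U :=
    Finset.sum_nonneg fun i _ => mul_nonneg (sq_nonneg _) (sq_nonneg _)
  have hVnn : 0 ≤ V := Finset.sum_nonneg fun i _ => sq_nonneg _
  have hU : ‖∑ i ∈ Finset.Icc 1 n, systI Am i ^ t • z i‖^2 = U :=
    norm_sum_sq _ _ horth _
  have hV : ‖Matrix.toEuclideanLin Am x‖^2 = V := by
    have h0 := norm_sum_sq (Finset.Icc 1 n) z horth (fun _ => 1)
    simp only [one_smul, one_pow, one_mul] at h0
    rw [hsum] at h0
    exact h0
  have hPhi : PhiLin Am t x = (cNorm Am t)⁻¹ • ∑ i ∈ Finset.Icc 1 n,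
      systI Am i ^ t • z i := by
    rw [PhiLin]
    simp only [LinearMap.smul_apply, LinearMap.coe_sum, Finset.sum_apply,
      LinearMap.comp_apply, ContinuousLinearMap.coe_coe, Submodule.coe_subtype]
    rfl
  have key1 : ‖PhiLin Am t x‖ = Real.sqrt U / cNorm Am t := by
    rw [hPhi, norm_smul, Real.norm_eq_abs, abs_of_pos (inv_pos.2 hcpos)]
    rw [show ‖∑ i ∈ Finset.Icc 1 n, systI Am i ^ t • z i‖ = Real.sqrt U by
      rw [← hU, Real.sqrt_sq (norm_nonneg _)]]
    rw [inv_mul_eq_div]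
  have key2 : (syst1 Am / D) ^ t * ‖Matrix.toEuclideanLin Am x‖ =
      Real.sqrt ((syst1 Am ^ t)^2 * V) / cNorm Am t := by
    rw [Real.div_rpow hs.le hDpos.le, hc]
    rw [Real.sqrt_mul (sq_nonneg _), Real.sqrt_sq (Real.rpow_nonneg hs.le t)]
    rw [show ‖Matrix.toEuclideanLin Am x‖ = Real.sqrt V by
      rw [← hV, Real.sqrt_sq (norm_nonneg _)]]
    ring
  have hUV : (syst1 Am ^ t)^2 * V ≤ U := by
    rw [hVdef, Finset.mul_sum, hUdef]
    refine Finset.sum_le_sum fun i hi => ?_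
    refine mul_le_mul_of_nonneg_right ?_ (sq_nonneg _)
    have h2 : syst1 Am ^ t ≤ systI Am i ^ t :=
      Real.rpow_le_rpow hs.le (hmem i hi).1 ht
    exact pow_le_pow_left₀ (Real.rpow_nonneg hs.le t) h2 2
  have hdiviff : ∀ a b : ℝ, a / cNorm Am t = b / cNorm Am t ↔ a = b := by
    intro a b
    rw [div_eq_div_iff hcpos.ne' hcpos.ne']
    exact ⟨fun h => mul_right_cancel₀ hcpos.ne' h, fun h => by rw [h]⟩
  constructor
  · rw [key1, key2]
    exact (div_le_div_iff_of_pos_right hcpos).2 (Real.sqrt_le_sqrt hUV)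
  · intro htpos
    rw [key1, key2, hdiviff, Real.sqrt_inj hUnn (mul_nonneg (sq_nonneg _) hVnn)]
    constructor
    · -- equality implies x ∈ Λ₁
      intro hEq
      have hsz : ∑ i ∈ Finset.Icc 1 n,
          ((systI Am i ^ t)^2 - (syst1 Am ^ t)^2) * ‖z i‖^2 = 0 := by
        have hexp : ∑ i ∈ Finset.Icc 1 n,
            ((systI Am i ^ t)^2 - (syst1 Am ^ t)^2) * ‖z i‖^2
            = U - (syst1 Am ^ t)^2 * V := by
          rw [hUdef, hVdef, Finset.mul_sum, ← Finset.sum_sub_distrib]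
          refine Finset.sum_congr rfl fun i hi => ?_
          ring
        rw [hexp, hEq, sub_self]
      have hnonneg : ∀ i ∈ Finset.Icc 1 n,
          0 ≤ ((systI Am i ^ t)^2 - (syst1 Am ^ t)^2) * ‖z i‖^2 := by
        intro i hi
        refine mul_nonneg ?_ (sq_nonneg _)
        have h2 : syst1 Am ^ t ≤ systI Am i ^ t :=
          Real.rpow_le_rpow hs.le (hmem i hi).1 ht
        have h3 : 0 ≤ syst1 Am ^ t := Real.rpow_nonneg hs.le t
        nlinarith
      have hterm := (Finset.sum_eq_zero_iff_of_nonneg hnonneg).1 hsz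
      have hyW1 : Matrix.toEuclideanLin Am x ∈ WE Am 1 := by
        rw [← hsum]
        refine Submodule.sum_mem _ fun i hi => ?_
        rcases mul_eq_zero.1 (hterm i hi) with h0 | h0
        · -- systI Am i = syst1 Am
          have heq : systI Am i ^ t = syst1 Am ^ t :=
            sq_sub_eq_zero (Real.rpow_pos_of_pos (hmem i hi).2 t)
              (Real.rpow_pos_of_pos hs t) h0
          have hmi : systI Am i = syst1 Am :=
            rpow_base_inj (hmem i hi).2 hs htpos heq
          have hLam : LambdaE Am i = LambdaE Am 1 :=
            lambdaE_congr Am (Finset.mem_Icc.1 hi).1 le_rfl (by rw [hmi, hs1])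
          have hWeq : WE Am i = WE Am 1 := by rw [WE, WE, hLam]
          rw [← hWeq]
          exact theta_le_WE Am i (hzmem i)
        · have hz0 : z i = 0 := norm_eq_zero.1 ((pow_eq_zero_iff two_ne_zero).1 h0)
          rw [hz0]; exact Submodule.zero_mem _
      obtain ⟨x', hx', hfx⟩ := hyW1
      rw [← toEuclideanLin_inj Am Bm hBA hfx]
      exact hx'
    · -- x ∈ Λ₁ implies equality
      intro hx
      have hyW1 : Matrix.toEuclideanLin Am x ∈ WE Am 1 := ⟨x, hx, rfl⟩
      have hTh1 : ThetaE Am 1 = WE Am 1 := by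
        rw [theta_def, WE_zero, Submodule.bot_orthogonal_eq_top, top_inf_eq]
      have hz1 : z 1 = Matrix.toEuclideanLin Am x :=
        Submodule.starProjection_eq_self_iff.2 (hTh1 ▸ hyW1)
      have hzir : ∀ i ∈ Finset.Icc 1 n, i ≠ 1 → z i = 0 := by
        intro i hi hi1
        rw [Finset.mem_Icc] at hi
        have hyWim : Matrix.toEuclideanLin Am x ∈ WE Am (i-1) :=
          WE_mono Am (i := 1) (j := i-1) (by omega) (by omega) hyW1
        have hyO : Matrix.toEuclideanLin Am x ∈ (ThetaE Am i)ᗮ := by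
          refine (Submodule.mem_orthogonal _ _).2 fun u hu => ?_
          have := (Submodule.mem_orthogonal _ _).1 (theta_le_orth Am i hu) _ hyWim
          rwa [real_inner_comm] at this
        show ((orthogonalProjection (ThetaE Am i) (Matrix.toEuclideanLin Am x) :
          EuclideanSpace ℝ (Fin n))) = 0
        rw [Submodule.orthogonalProjectionOnto_apply_of_mem_orthogonal hyO]
        rfl
      have hUcalc : U = (syst1 Am ^ t)^2 * V := by
        have h1mem : 1 ∈ Finset.Icc 1 n := Finset.mem_Icc.2 ⟨le_rfl, hn⟩
        rw [hUdef, hVdef, Finset.mul_sum]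
        refine Finset.sum_congr rfl fun i hi => ?_
        rcases eq_or_ne i 1 with rfl | hi1
        · rw [hs1]
        · rw [hzir i hi hi1]
          simp
      exact hUcalc
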